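/- A completely regular Hausdorff space X is a WCF-space if it is cozero-complemented; that is, if for each f ∈ C(X) there exists g ∈ C(X) with Coz(f) ∩ Coz(g) = ∅ and int Z(f) ∩ int Z(g) = ∅, then any two disjoint cozero-sets in X can be separated by zero-sets with disjoint interiors. -/
import Mathlib


/-- A cozero-complemented completely regular Hausdorff space is a WCF-space. -/
theorem stmt12 {X : Type*} [TopologicalSpace X] [T2Space X] [CompletelyRegularSpace X]
    (hcc : ∀ f : C(X, ℝ), ∃ g : C(X, ℝ),
      (f ⁻¹' {0})ᶜ ∩ (g ⁻¹' {0})ᶜ = ∅ ∧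
      interior (f ⁻¹' {0}) ∩ interior (g ⁻¹' {0}) = ∅) :
    ∀ f g : C(X, ℝ), (f ⁻¹' {0})ᶜ ∩ (g ⁻¹' {0})ᶜ = ∅ →
      ∃ h₁ h₂ : C(X, ℝ), (f ⁻¹' {0})ᶜ ⊆ h₁ ⁻¹' {0} ∧ (g ⁻¹' {0})ᶜ ⊆ h₂ ⁻¹' {0} ∧
        interior (h₁ ⁻¹' {0}) ∩ interior (h₂ ⁻¹' {0}) = ∅ := by
  intro f g hfg
  obtain ⟨g', hdisj, hint⟩ := hcc f
  refine ⟨g', f, ?_, ?_, ?_⟩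
  · intro x hx
    by_contra hx'
    exact Set.eq_empty_iff_forall_notMem.mp hdisj x ⟨hx, hx'⟩
  · intro x hx
    by_contra hx'
    exact Set.eq_empty_iff_forall_notMem.mp hfg x ⟨hx', hx⟩
  · rw [Set.inter_comm]; exact hint
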